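/- Let ω be a finite positive Borel measure on [0,1) with ω̂ doubling. Then ω*(r) ≍ ω̂(r)(1-r) for r ∈ [1/2, 1), where ω*(r) = ∫_r¹ log(s/r) s dω(s); more precisely, ω*(r) ≤ ω̂(r)(1-r)/r always holds, and the doubling property gives a constant c > 0 with ω*(r) ≥ c·ω̂(r)(1-r) for r ≥ 1/2. -/

import Mathlib

open MeasureTheory Set

theorem stmt_9 (ω : Measure ℝ) [IsFiniteMeasure ω] (C : ℝ) (hC : 1 ≤ C)
    (hdoub : ∀ r : ℝ, 0 ≤ r → r < 1 →
      (ω (Ico r 1)).toReal ≤ C * (ω (Ico ((1 + r) / 2) 1)).toReal) :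
    (∀ r : ℝ, 1 / 2 ≤ r → r < 1 →
      (∫ s in Ico r 1, Real.log (s / r) * s ∂ω) ≤ (ω (Ico r 1)).toReal * (1 - r) / r) ∧
    ∃ c : ℝ, 0 < c ∧ ∀ r : ℝ, 1 / 2 ≤ r → r < 1 →
      c * ((ω (Ico r 1)).toReal * (1 - r)) ≤ (∫ s in Ico r 1, Real.log (s / r) * s ∂ω) := by
  have hCpos : (0:ℝ) < C := lt_of_lt_of_le one_pos hC
  -- pointwise norm bound
  have hbound : ∀ r : ℝ, 1/2 ≤ r → r < 1 → ∀ s ∈ Ico r 1,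
      ‖Real.log (s / r) * s‖ ≤ (1 - r) / r := by
    intro r hr hr1 s hs
    obtain ⟨hs1, hs2⟩ := hs
    have hr0 : (0:ℝ) < r := by linarith
    have hs0 : (0:ℝ) < s := lt_of_lt_of_le hr0 hs1
    have hsr : (0:ℝ) < s / r := div_pos hs0 hr0
    have hlog0 : 0 ≤ Real.log (s / r) :=
      Real.log_nonneg (by rw [le_div_iff₀ hr0]; linarith)
    have hlog : Real.log (s / r) ≤ (1 - r) / r := by
      have h1 := Real.log_le_sub_one_of_pos hsr
      have h2 : s / r - 1 ≤ (1 - r) / r := by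
        rw [div_sub_one hr0.ne']
        gcongr
        all_goals linarith
      linarith
    rw [Real.norm_eq_abs, abs_of_nonneg (mul_nonneg hlog0 hs0.le)]
    calc Real.log (s / r) * s ≤ Real.log (s / r) * 1 :=
          mul_le_mul_of_nonneg_left (by linarith) hlog0
      _ = Real.log (s / r) := mul_one _
      _ ≤ (1 - r) / r := hlog
  have hmeas : ∀ r : ℝ, AEStronglyMeasurable (fun s => Real.log (s / r) * s)
      (ω.restrict (Ico r 1)) := by
    intro r
    exact ((Real.measurable_log.comp (measurable_id.div_const r)).mul
      measurable_id).aestronglyMeasurable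
  have hint : ∀ r : ℝ, 1/2 ≤ r → r < 1 →
      IntegrableOn (fun s => Real.log (s / r) * s) (Ico r 1) ω := by
    intro r hr hr1
    apply Integrable.mono' (integrable_const ((1 - r) / r)) (hmeas r)
    filter_upwards [ae_restrict_mem measurableSet_Ico] with s hs
    exact hbound r hr hr1 s hs
  constructor
  · intro r hr hr1
    have hr0 : (0:ℝ) < r := by linarith
    have h := norm_setIntegral_le_of_norm_le_const (μ := ω) (s := Ico r 1)
      (measure_lt_top _ _) (hbound r hr hr1)
    calc (∫ s in Ico r 1, Real.log (s / r) * s ∂ω)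
        ≤ ‖∫ s in Ico r 1, Real.log (s / r) * s ∂ω‖ := le_abs_self _
      _ ≤ (1 - r) / r * (ω (Ico r 1)).toReal := h
      _ = (ω (Ico r 1)).toReal * (1 - r) / r := by ring
  · refine ⟨1 / (4 * C), by positivity, fun r hr hr1 => ?_⟩
    have hr0 : (0:ℝ) < r := by linarith
    set m : ℝ := (1 + r) / 2 with hm
    have hm1 : m < 1 := by rw [hm]; linarith
    have hrm : r ≤ m := by rw [hm]; linarith
    have hsub : Ico m 1 ⊆ Ico r 1 := Ico_subset_Ico hrm le_rfl
    have hnonneg : ∀ s ∈ Ico r 1, 0 ≤ Real.log (s / r) * s := by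
      intro s hs
      obtain ⟨hs1, hs2⟩ := hs
      have hs0 : (0:ℝ) < s := lt_of_lt_of_le hr0 hs1
      exact mul_nonneg (Real.log_nonneg (by rw [le_div_iff₀ hr0]; linarith)) hs0.le
    -- lower bound on Ico m 1
    have hpt : ∀ s ∈ Ico m 1, (1 - r) / 4 ≤ Real.log (s / r) * s := by
      intro s hs
      obtain ⟨hs1, hs2⟩ := hs
      have hs0 : (0:ℝ) < s := by rw [hm] at hs1; linarith
      have hshalf : (1:ℝ)/2 ≤ s := by rw [hm] at hs1; linarith
      have hlog : (1 - r) / 2 ≤ Real.log (s / r) := by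
        have h1 : Real.log (r / s) ≤ r / s - 1 :=
          Real.log_le_sub_one_of_pos (div_pos hr0 hs0)
        have h2 : Real.log (r / s) = - Real.log (s / r) := by
          rw [← Real.log_inv, inv_div]
        have h3 : 1 - r / s ≤ Real.log (s / r) := by rw [h2] at h1; linarith
        have h4 : 1 - r / s = (s - r) / s := by field_simp
        have h5 : s - r ≤ (s - r) / s := by
          rw [le_div_iff₀ hs0]
          nlinarith
        have h6 : (1 - r) / 2 ≤ s - r := by rw [hm] at hs1; linarith
        linarith [h4 ▸ h3]
      have hlog0 : 0 ≤ Real.log (s / r) :=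
        Real.log_nonneg (by rw [le_div_iff₀ hr0]; linarith)
      calc (1 - r) / 4 = (1 - r) / 2 * (1/2) := by ring
        _ ≤ Real.log (s / r) * s := mul_le_mul hlog hshalf (by norm_num) hlog0
    have hintm : IntegrableOn (fun s => Real.log (s / r) * s) (Ico m 1) ω :=
      (hint r hr hr1).mono_set hsub
    have h2 : (1 - r) / 4 * (ω (Ico m 1)).toReal ≤
        ∫ s in Ico m 1, Real.log (s / r) * s ∂ω := by
      have := setIntegral_mono_on (μ := ω) (s := Ico m 1)
        (f := fun _ => (1 - r) / 4) (g := fun s => Real.log (s / r) * s)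
        (integrable_const _) hintm measurableSet_Ico hpt
      rwa [setIntegral_const, smul_eq_mul, mul_comm] at this
    have h1 : (∫ s in Ico m 1, Real.log (s / r) * s ∂ω) ≤
        ∫ s in Ico r 1, Real.log (s / r) * s ∂ω := by
      apply setIntegral_mono_set (hint r hr hr1)
      · filter_upwards [ae_restrict_mem measurableSet_Ico] with s hs
        exact hnonneg s hs
      · exact HasSubset.Subset.eventuallyLE hsub
    have h3 := hdoub r (by linarith) hr1
    have hM0 : 0 ≤ (ω (Ico m 1)).toReal := ENNReal.toReal_nonneg
    have hr1' : (0:ℝ) ≤ 1 - r := by linarith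
    have : 1 / (4 * C) * ((ω (Ico r 1)).toReal * (1 - r)) ≤
        (1 - r) / 4 * (ω (Ico m 1)).toReal := by
      rw [div_mul_eq_mul_div, one_mul, div_le_iff₀ (by positivity)]
      nlinarith
    linarith
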